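/- Let F be a field with char F ≠ 2, let e₁,e₂,e₃ be a basis of a 3-dimensional anti-commutative algebra L, set f₁ = e₂·e₃, f₂ = e₃·e₁, f₃ = e₁·e₂, and suppose f₁,f₂,f₃ also form a basis with f_i = Σ_j a_{ij} e_j. Then L satisfies the Jacobi identity if and only if the matrix A = (a_{ij}) is symmetric. -/

import Mathlib

/-- Let `char F ≠ 2`, let `e₁,e₂,e₃` be a basis of a 3-dimensional
anti-commutative algebra `L`, set `f₁ = e₂·e₃`, `f₂ = e₃·e₁`, `f₃ = e₁·e₂`,
and suppose `f₁,f₂,f₃` also form a basis with `f_i = Σ_j a_{ij} e_j`.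
Then `L` satisfies the Jacobi identity iff the matrix `A = (a_{ij})` is symmetric. -/
theorem stmt15 {F L : Type*} [Field F] [AddCommGroup L] [Module F L]
    (hchar : ringChar F ≠ 2)
    (mul : L →ₗ[F] L →ₗ[F] L)
    (halt : ∀ x : L, mul x x = 0)
    (e : Module.Basis (Fin 3) F L)
    (f : Fin 3 → L)
    (hf0 : f 0 = mul (e 1) (e 2))
    (hf1 : f 1 = mul (e 2) (e 0))
    (hf2 : f 2 = mul (e 0) (e 1))
    (c : Module.Basis (Fin 3) F L) (hc : ∀ i, c i = f i)
    (a : Matrix (Fin 3) (Fin 3) F)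
    (ha : ∀ i, f i = ∑ j : Fin 3, a i j • e j) :
    (∀ x y z : L, mul x (mul y z) + mul y (mul z x) + mul z (mul x y) = 0) ↔
      a.IsSymm := by
  have anti : ∀ x y : L, mul x y = -mul y x := by
    intro x y
    have h := halt (x + y)
    simp only [map_add, LinearMap.add_apply, halt x, halt y, zero_add, add_zero] at h
    exact eq_neg_of_add_eq_zero_left (by rwa [add_comm] at h)
  have m01 : mul (e 0) (e 1) = f 2 := hf2.symm
  have m12 : mul (e 1) (e 2) = f 0 := hf0.symm
  have m20 : mul (e 2) (e 0) = f 1 := hf1.symm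
  have m10 : mul (e 1) (e 0) = -f 2 := by rw [anti, m01]
  have m21 : mul (e 2) (e 1) = -f 0 := by rw [anti, m12]
  have m02 : mul (e 0) (e 2) = -f 1 := by rw [anti, m20]
  -- expansion of the Jacobi expression on (e0, e1, e2)
  have expand : mul (e 0) (mul (e 1) (e 2)) + mul (e 1) (mul (e 2) (e 0)) +
      mul (e 2) (mul (e 0) (e 1)) =
      (a 1 2 - a 2 1) • f 0 + (a 2 0 - a 0 2) • f 1 + (a 0 1 - a 1 0) • f 2 := by
    rw [m12, m20, m01, ha 0, ha 1, ha 2]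
    simp only [Fin.sum_univ_three, map_add, map_smul, m01, m02, m10, m12, m20, m21,
      halt, smul_neg, smul_zero]
    simp only [ha, Fin.sum_univ_three]
    module
  constructor
  · intro hJ
    have h012 := hJ (e 0) (e 1) (e 2)
    rw [expand] at h012
    simp only [← hc] at h012
    have hli := Fintype.linearIndependent_iff.mp c.linearIndependent
    have key := hli ![a 1 2 - a 2 1, a 2 0 - a 0 2, a 0 1 - a 1 0] (by
      simpa [Fin.sum_univ_three] using h012)
    have k0 := sub_eq_zero.mp (key 0)
    have k1 := sub_eq_zero.mp (key 1)
    have k2 := sub_eq_zero.mp (key 2)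
    refine Matrix.IsSymm.ext fun i j => ?_
    fin_cases i <;> fin_cases j <;>
      first | rfl | exact k0 | exact k0.symm | exact k1 | exact k1.symm
            | exact k2 | exact k2.symm
  · intro hsym
    have h12 : a 1 2 = a 2 1 := by rw [← hsym.apply 1 2]
    have h20 : a 2 0 = a 0 2 := by rw [← hsym.apply 2 0]
    have h01 : a 0 1 = a 1 0 := by rw [← hsym.apply 0 1]
    have hE0 : mul (e 0) (f 0) + mul (e 1) (f 1) + mul (e 2) (f 2) = 0 := by
      rw [← m12, ← m20, ← m01, expand, h12, h20, h01]
      simp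
    have hE1 : mul (e 1) (f 1) + mul (e 2) (f 2) + mul (e 0) (f 0) = 0 := by
      calc mul (e 1) (f 1) + mul (e 2) (f 2) + mul (e 0) (f 0)
          = mul (e 0) (f 0) + mul (e 1) (f 1) + mul (e 2) (f 2) := by abel
        _ = 0 := hE0
    have hE2 : mul (e 2) (f 2) + mul (e 0) (f 0) + mul (e 1) (f 1) = 0 := by
      calc mul (e 2) (f 2) + mul (e 0) (f 0) + mul (e 1) (f 1)
          = mul (e 0) (f 0) + mul (e 1) (f 1) + mul (e 2) (f 2) := by abel
        _ = 0 := hE0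
    have hN0 : -mul (e 0) (f 0) + -mul (e 2) (f 2) + -mul (e 1) (f 1) = 0 := by
      calc -mul (e 0) (f 0) + -mul (e 2) (f 2) + -mul (e 1) (f 1)
          = -(mul (e 0) (f 0) + mul (e 1) (f 1) + mul (e 2) (f 2)) := by abel
        _ = 0 := by rw [hE0, neg_zero]
    have hN1 : -mul (e 1) (f 1) + -mul (e 0) (f 0) + -mul (e 2) (f 2) = 0 := by
      calc -mul (e 1) (f 1) + -mul (e 0) (f 0) + -mul (e 2) (f 2)
          = -(mul (e 0) (f 0) + mul (e 1) (f 1) + mul (e 2) (f 2)) := by abel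
        _ = 0 := by rw [hE0, neg_zero]
    have hN2 : -mul (e 2) (f 2) + -mul (e 1) (f 1) + -mul (e 0) (f 0) = 0 := by
      calc -mul (e 2) (f 2) + -mul (e 1) (f 1) + -mul (e 0) (f 0)
          = -(mul (e 0) (f 0) + mul (e 1) (f 1) + mul (e 2) (f 2)) := by abel
        _ = 0 := by rw [hE0, neg_zero]
    have key : ∀ i j k : Fin 3, mul (e i) (mul (e j) (e k)) + mul (e j) (mul (e k) (e i)) +
        mul (e k) (mul (e i) (e j)) = 0 := by
      have tri : ∀ i : Fin 3, i = 0 ∨ i = 1 ∨ i = 2 := by decide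
      intro i j k
      rcases tri i with rfl | rfl | rfl <;> rcases tri j with rfl | rfl | rfl <;>
        rcases tri k with rfl | rfl | rfl <;>
        simp only [m01, m02, m10, m12, m20, m21, halt, map_neg, map_zero, neg_neg,
          add_zero, zero_add, add_neg_cancel, neg_add_cancel] <;>
        first | rfl | exact hE0 | exact hE1 | exact hE2
              | exact hN0 | exact hN1 | exact hN2
    have key2 : ∀ (i j : Fin 3) (z : L), mul (e i) (mul (e j) z) +
        mul (e j) (mul z (e i)) + mul z (mul (e i) (e j)) = 0 := by
      intro i j z
      rw [← e.sum_repr z]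
      simp only [map_sum, map_smul, LinearMap.sum_apply, LinearMap.smul_apply]
      rw [← Finset.sum_add_distrib, ← Finset.sum_add_distrib]
      refine Finset.sum_eq_zero fun k _ => ?_
      rw [← smul_add, ← smul_add, key i j k, smul_zero]
    have key1 : ∀ (i : Fin 3) (y z : L), mul (e i) (mul y z) +
        mul y (mul z (e i)) + mul z (mul (e i) y) = 0 := by
      intro i y z
      rw [← e.sum_repr y]
      simp only [map_sum, map_smul, LinearMap.sum_apply, LinearMap.smul_apply]
      rw [← Finset.sum_add_distrib, ← Finset.sum_add_distrib]
      refine Finset.sum_eq_zero fun j _ => ?_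
      rw [← smul_add, ← smul_add, key2 i j z, smul_zero]
    intro x y z
    rw [← e.sum_repr x]
    simp only [map_sum, map_smul, LinearMap.sum_apply, LinearMap.smul_apply]
    rw [← Finset.sum_add_distrib, ← Finset.sum_add_distrib]
    refine Finset.sum_eq_zero fun i _ => ?_
    rw [← smul_add, ← smul_add, key1 i y z, smul_zero]
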